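/- Let G and G̃ be bipartite graphs without isolated vertices and let s, t ≥ 1 be natural numbers. Then there exists a bipartite graph without isolated vertices having exactly 2^{st}·ι_m(G) + ((2^{st} − 1)/(2^t − 1))·ι_m(G̃) maximal independent sets and at most ν(G) + ν(G̃) + 2s(t+1) + 3 vertices. -/

import Mathlib

/-- `s` is an independent set of vertices in `G`. -/
def IsIndep {V : Type*} (G : SimpleGraph V) (s : Finset V) : Prop :=
  ∀ u ∈ s, ∀ v ∈ s, ¬ G.Adj u v

/-- `s` is a maximal independent set in `G`. -/
def IsMaxIndep {V : Type*} (G : SimpleGraph V) (s : Finset V) : Prop :=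
  IsIndep G s ∧ ∀ t : Finset V, IsIndep G t → s ⊆ t → s = t

/-- `ι G`: the number of independent sets of `G` (including `∅`). -/
noncomputable def iota {V : Type*} [Fintype V] (G : SimpleGraph V) : ℕ :=
  Nat.card {s : Finset V // IsIndep G s}

/-- `ι_m G`: the number of maximal independent sets of `G`. -/
noncomputable def iotaM {V : Type*} [Fintype V] (G : SimpleGraph V) : ℕ :=
  Nat.card {s : Finset V // IsMaxIndep G s}

/-- `(L, R)` is a bipartition of `G`. -/
def IsBipartition {V : Type*} (G : SimpleGraph V) (L R : Finset V) : Prop :=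
  Disjoint L R ∧ (∀ v : V, v ∈ L ∨ v ∈ R) ∧
    ∀ u v : V, G.Adj u v → (u ∈ L ∧ v ∈ R) ∨ (u ∈ R ∧ v ∈ L)

/-- `G` is bipartite. -/
def IsBipartite {V : Type*} (G : SimpleGraph V) : Prop :=
  ∃ L R : Finset V, IsBipartition G L R

/-- `G` has no isolated vertices. -/
def NoIsolated {V : Type*} (G : SimpleGraph V) : Prop :=
  ∀ v : V, ∃ u : V, G.Adj v u

namespace Stmt15


inductive CV (α β : Type*) (s t : ℕ) : Type _
  | ga : α → CV α β s t
  | gb : β → CV α β s t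
  | vx : Fin s → Fin t → CV α β s t
  | vy : Fin s → Fin t → CV α β s t
  | vu : Fin s → CV α β s t
  | vv : Fin s → CV α β s t

variable {α β : Type*} {s t : ℕ}

def cvEquiv : CV α β s t ≃ (α ⊕ β ⊕ (Fin s × Fin t) ⊕ (Fin s × Fin t) ⊕ Fin s ⊕ Fin s) where
  toFun z := match z with
    | .ga a => .inl a
    | .gb b => .inr (.inl b)
    | .vx i j => .inr (.inr (.inl (i,j)))
    | .vy i j => .inr (.inr (.inr (.inl (i,j))))
    | .vu i => .inr (.inr (.inr (.inr (.inl i))))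
    | .vv i => .inr (.inr (.inr (.inr (.inr i))))
  invFun z := match z with
    | .inl a => .ga a
    | .inr (.inl b) => .gb b
    | .inr (.inr (.inl (i,j))) => .vx i j
    | .inr (.inr (.inr (.inl (i,j)))) => .vy i j
    | .inr (.inr (.inr (.inr (.inl i)))) => .vu i
    | .inr (.inr (.inr (.inr (.inr i)))) => .vv i
  left_inv := by intro z; cases z <;> rfl
  right_inv := by rintro (a|b|⟨i,j⟩|⟨i,j⟩|i|i) <;> rfl

noncomputable instance [Fintype α] [Fintype β] : Fintype (CV α β s t) :=
  Fintype.ofEquiv _ cvEquiv.symm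

lemma card_CV [Fintype α] [Fintype β] :
    Fintype.card (CV α β s t) = Fintype.card α + Fintype.card β + (s*t + (s*t + (s + s))) := by
  rw [Fintype.card_congr (cvEquiv (α := α) (β := β) (s := s) (t := t))]
  simp [add_assoc]

variable (G : SimpleGraph α) (Gt : SimpleGraph β) (pA : α → Prop) (pB : β → Prop)

/-- The asymmetric adjacency skeleton. -/
def CR : CV α β s t → CV α β s t → Prop
  | .ga a, .ga a' => G.Adj a a'
  | .gb b, .gb b' => Gt.Adj b b'
  | .ga a, .gb b => (pA a ∧ ¬ pB b) ∨ (¬ pA a ∧ pB b)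
  | .vx i j, .vy i' j' => i = i' ∧ j = j'
  | .vu i, .vv i' => i' ≤ i
  | .vv i, .vx i' _ => i ≤ i'
  | .vv _, .ga a => pA a
  | .vu i, .gb b => i.val = s - 1 ∧ ¬ pB b
  | .vx i _, .gb b => i.val = s - 1 ∧ ¬ pB b
  | _, _ => False

/-- The constructed graph. -/
def HG : SimpleGraph (CV α β s t) where
  Adj z w := z ≠ w ∧ (CR G Gt pA pB z w ∨ CR G Gt pA pB w z)
  symm := ⟨by
    rintro z w ⟨h1, h2⟩
    exact ⟨h1.symm, h2.symm⟩⟩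
  loopless := ⟨fun z h => h.1 rfl⟩

section AdjLemmas

@[simp] lemma adj_gaga {a a'} : (HG G Gt pA pB).Adj (.ga a) (.ga a' : CV α β s t) ↔ G.Adj a a' := by
  constructor
  · rintro ⟨-, h | h⟩
    · exact h
    · exact h.symm
  · intro h; exact ⟨by simp [h.ne], Or.inl h⟩

@[simp] lemma adj_gbgb {b b'} : (HG G Gt pA pB).Adj (.gb b) (.gb b' : CV α β s t) ↔ Gt.Adj b b' := by
  constructor
  · rintro ⟨-, h | h⟩
    · exact h
    · exact h.symm
  · intro h; exact ⟨by simp [h.ne], Or.inl h⟩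

@[simp] lemma adj_gagb {a b} : (HG G Gt pA pB).Adj (.ga a) (.gb b : CV α β s t) ↔
    ((pA a ∧ ¬ pB b) ∨ (¬ pA a ∧ pB b)) := by
  simp [HG, CR]

@[simp] lemma adj_gavx {a i j} : ¬ (HG G Gt pA pB).Adj (.ga a) (.vx i j : CV α β s t) := by
  simp [HG, CR]

@[simp] lemma adj_gavy {a i j} : ¬ (HG G Gt pA pB).Adj (.ga a) (.vy i j : CV α β s t) := by
  simp [HG, CR]

@[simp] lemma adj_gavu {a i} : ¬ (HG G Gt pA pB).Adj (.ga a) (.vu i : CV α β s t) := by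
  simp [HG, CR]

@[simp] lemma adj_gavv {a i} : (HG G Gt pA pB).Adj (.ga a) (.vv i : CV α β s t) ↔ pA a := by
  simp [HG, CR]

@[simp] lemma adj_gbvx {b i j} : (HG G Gt pA pB).Adj (.gb b) (.vx i j : CV α β s t) ↔
    (i.val = s - 1 ∧ ¬ pB b) := by
  simp [HG, CR, and_comm]

@[simp] lemma adj_gbvy {b i j} : ¬ (HG G Gt pA pB).Adj (.gb b) (.vy i j : CV α β s t) := by
  simp [HG, CR]

@[simp] lemma adj_gbvu {b i} : (HG G Gt pA pB).Adj (.gb b) (.vu i : CV α β s t) ↔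
    (i.val = s - 1 ∧ ¬ pB b) := by
  simp [HG, CR]

@[simp] lemma adj_gbvv {b i} : ¬ (HG G Gt pA pB).Adj (.gb b) (.vv i : CV α β s t) := by
  simp [HG, CR]

@[simp] lemma adj_vxvx {i j i' j'} : ¬ (HG G Gt pA pB).Adj (.vx i j) (.vx i' j' : CV α β s t) := by
  simp [HG, CR]

@[simp] lemma adj_vxvy {i j i' j'} : (HG G Gt pA pB).Adj (.vx i j) (.vy i' j' : CV α β s t) ↔
    (i = i' ∧ j = j') := by
  constructor
  · rintro ⟨-, h | h⟩
    · simpa [CR] using h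
    · simp [CR] at h
  · rintro ⟨rfl, rfl⟩
    exact ⟨by simp, Or.inl ⟨rfl, rfl⟩⟩

@[simp] lemma adj_vyvy {i j i' j'} : ¬ (HG G Gt pA pB).Adj (.vy i j) (.vy i' j' : CV α β s t) := by
  simp [HG, CR]

@[simp] lemma adj_vxvu {i j i'} : ¬ (HG G Gt pA pB).Adj (.vx i j) (.vu i' : CV α β s t) := by
  simp [HG, CR]

@[simp] lemma adj_vxvv {i j i'} : (HG G Gt pA pB).Adj (.vx i j) (.vv i' : CV α β s t) ↔ i' ≤ i := by
  simp [HG, CR]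

@[simp] lemma adj_vyvu {i j i'} : ¬ (HG G Gt pA pB).Adj (.vy i j) (.vu i' : CV α β s t) := by
  simp [HG, CR]

@[simp] lemma adj_vyvv {i j i'} : ¬ (HG G Gt pA pB).Adj (.vy i j) (.vv i' : CV α β s t) := by
  simp [HG, CR]

@[simp] lemma adj_vuvu {i i'} : ¬ (HG G Gt pA pB).Adj (.vu i) (.vu i' : CV α β s t) := by
  simp [HG, CR]

@[simp] lemma adj_vuvv {i i'} : (HG G Gt pA pB).Adj (.vu i) (.vv i' : CV α β s t) ↔ i' ≤ i := by
  simp [HG, CR]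

@[simp] lemma adj_vvvv {i i'} : ¬ (HG G Gt pA pB).Adj (.vv i) (.vv i' : CV α β s t) := by
  simp [HG, CR]

end AdjLemmas



variable {V : Type*} {G : SimpleGraph V}

lemma maxIndep_of_blockers {S : Finset V} (hind : IsIndep G S)
    (hbl : ∀ z ∉ S, ∃ w ∈ S, G.Adj z w) : IsMaxIndep G S := by
  refine ⟨hind, fun T hT hsub => Finset.Subset.antisymm hsub (fun z hzT => ?_)⟩
  by_contra hz
  obtain ⟨w, hwS, hadj⟩ := hbl z hz
  exact hT z hzT w (hsub hwS) hadj

lemma blockers_of_maxIndep {S : Finset V} (hS : IsMaxIndep G S) :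
    ∀ z ∉ S, ∃ w ∈ S, G.Adj z w := by
  classical
  intro z hz
  by_contra h
  push_neg at h
  have hind : IsIndep G (insert z S) := by
    intro u hu v hv hadj
    rcases Finset.mem_insert.1 hu with h1 | h1
    · rcases Finset.mem_insert.1 hv with h2 | h2
      · subst h1; subst h2; exact G.loopless.irrefl _ hadj
      · subst h1; exact h v h2 hadj
    · rcases Finset.mem_insert.1 hv with h2 | h2
      · subst h2; exact h u h1 hadj.symm
      · exact hS.1 u h1 v h2 hadj
  have := hS.2 (insert z S) hind (Finset.subset_insert _ _)
  exact hz (this ▸ Finset.mem_insert_self z S)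

lemma maxIndep_blocker {S : Finset V} (hS : IsMaxIndep G S) {a : V} (ha : a ∉ S) :
    ∃ w ∈ S, G.Adj a w := blockers_of_maxIndep hS a ha


section Mirror
variable {α β : Type*} {s t : ℕ} (G : SimpleGraph α) (Gt : SimpleGraph β)
  (pA : α → Prop) (pB : β → Prop)

@[simp] lemma adj_gbga {b a} : (HG G Gt pA pB).Adj (.gb b) (.ga a : CV α β s t) ↔
    ((pA a ∧ ¬ pB b) ∨ (¬ pA a ∧ pB b)) := by rw [SimpleGraph.adj_comm]; simp

@[simp] lemma adj_vxga {a i j} : ¬ (HG G Gt pA pB).Adj (.vx i j) (.ga a : CV α β s t) := by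
  rw [SimpleGraph.adj_comm]; simp

@[simp] lemma adj_vyga {a i j} : ¬ (HG G Gt pA pB).Adj (.vy i j) (.ga a : CV α β s t) := by
  rw [SimpleGraph.adj_comm]; simp

@[simp] lemma adj_vuga {a i} : ¬ (HG G Gt pA pB).Adj (.vu i) (.ga a : CV α β s t) := by
  rw [SimpleGraph.adj_comm]; simp

@[simp] lemma adj_vvga {a i} : (HG G Gt pA pB).Adj (.vv i) (.ga a : CV α β s t) ↔ pA a := by
  rw [SimpleGraph.adj_comm]; simp

@[simp] lemma adj_vxgb {b i j} : (HG G Gt pA pB).Adj (.vx i j) (.gb b : CV α β s t) ↔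
    (i.val = s - 1 ∧ ¬ pB b) := by rw [SimpleGraph.adj_comm]; simp

@[simp] lemma adj_vygb {b i j} : ¬ (HG G Gt pA pB).Adj (.vy i j) (.gb b : CV α β s t) := by
  rw [SimpleGraph.adj_comm]; simp

@[simp] lemma adj_vugb {b i} : (HG G Gt pA pB).Adj (.vu i) (.gb b : CV α β s t) ↔
    (i.val = s - 1 ∧ ¬ pB b) := by rw [SimpleGraph.adj_comm]; simp

@[simp] lemma adj_vvgb {b i} : ¬ (HG G Gt pA pB).Adj (.vv i) (.gb b : CV α β s t) := by
  rw [SimpleGraph.adj_comm]; simp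

@[simp] lemma adj_vyvx {i j i' j'} : (HG G Gt pA pB).Adj (.vy i j) (.vx i' j' : CV α β s t) ↔
    (i' = i ∧ j' = j) := by rw [SimpleGraph.adj_comm]; simp

@[simp] lemma adj_vuvx {i j i'} : ¬ (HG G Gt pA pB).Adj (.vu i') (.vx i j : CV α β s t) := by
  rw [SimpleGraph.adj_comm]; simp

@[simp] lemma adj_vvvx {i j i'} : (HG G Gt pA pB).Adj (.vv i') (.vx i j : CV α β s t) ↔ i' ≤ i := by
  rw [SimpleGraph.adj_comm]; simp

@[simp] lemma adj_vuvy {i j i'} : ¬ (HG G Gt pA pB).Adj (.vu i') (.vy i j : CV α β s t) := by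
  rw [SimpleGraph.adj_comm]; simp

@[simp] lemma adj_vvvy {i j i'} : ¬ (HG G Gt pA pB).Adj (.vv i') (.vy i j : CV α β s t) := by
  rw [SimpleGraph.adj_comm]; simp

@[simp] lemma adj_vvvu {i i'} : (HG G Gt pA pB).Adj (.vv i') (.vu i : CV α β s t) ↔ i' ≤ i := by
  rw [SimpleGraph.adj_comm]; simp

end Mirror

section Sets
variable {α β : Type*} {s t : ℕ} [Fintype α] [Fintype β]

open Classical in
noncomputable def mkSet (P : CV α β s t → Prop) : Finset (CV α β s t) :=
  Finset.univ.filter P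

lemma mem_mkSet {P : CV α β s t → Prop} {z : CV α β s t} : z ∈ mkSet P ↔ P z := by
  simp [mkSet]

variable (pA : α → Prop) (pB : β → Prop)

def leftPred (M : Finset α) (bb : Fin s × Fin t → Bool) : CV α β s t → Prop
  | .ga a => a ∈ M
  | .gb b => pB b ∧ ∀ a ∈ M, pA a
  | .vx i j => bb (i, j) = true
  | .vy i j => bb (i, j) = false
  | .vu _ => True
  | .vv _ => False

def rightPred (N : Finset β) (k : Fin s) (bb : Fin k.val × Fin t → Bool) : CV α β s t → Prop
  | .ga a => ¬ pA a ∧ ∀ b ∈ N, ¬ pB b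
  | .gb b => b ∈ N
  | .vx i j => ∃ h : i.val < k.val, bb (⟨i.val, h⟩, j) = true
  | .vy i j => ∀ h : i.val < k.val, bb (⟨i.val, h⟩, j) = false
  | .vu i => i.val < k.val
  | .vv i => k.val ≤ i.val

end Sets

section MIS
variable {α β : Type*} {s t : ℕ} [Fintype α] [Fintype β]
variable {G : SimpleGraph α} {Gt : SimpleGraph β} {pA : α → Prop} {pB : β → Prop}

def ftop (s : ℕ) (hs : 0 < s) : Fin s := ⟨s - 1, by omega⟩

theorem leftSet_maxIndep (hGtadj : ∀ b b', Gt.Adj b b' → (pB b ↔ ¬ pB b'))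
    (hs : 0 < s) {M : Finset α} (bb : Fin s × Fin t → Bool) (hM : IsMaxIndep G M) :
    IsMaxIndep (HG G Gt pA pB) (mkSet (leftPred pA pB M bb) : Finset (CV α β s t)) := by
  classical
  apply maxIndep_of_blockers
  · intro z hz w hw hadj
    rw [mem_mkSet] at hz hw
    cases z <;> cases w <;> simp_all [leftPred]
    all_goals first
      | (exact hM.1 _ hz _ hw hadj)
      | (have := hGtadj _ _ hadj; tauto)
  · intro z hz
    rw [mem_mkSet] at hz
    cases z with
    | ga a =>
      obtain ⟨a', ha'M, hadj⟩ := maxIndep_blocker hM hz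
      exact ⟨.ga a', mem_mkSet.2 ha'M, (adj_gaga G Gt pA pB).2 hadj⟩
    | gb b =>
      by_cases hb : pB b
      · have h2 : ¬ (∀ a ∈ M, pA a) := fun h => hz ⟨hb, h⟩
        push_neg at h2
        obtain ⟨a, haM, hpa⟩ := h2
        exact ⟨.ga a, mem_mkSet.2 haM, (adj_gbga G Gt pA pB).2 (Or.inr ⟨hpa, hb⟩)⟩
      · exact ⟨.vu (ftop s hs), mem_mkSet.2 trivial, (adj_gbvu G Gt pA pB).2 ⟨rfl, hb⟩⟩
    | vx i j =>
      have hbb : bb (i, j) = false := by simpa [leftPred] using hz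
      exact ⟨.vy i j, mem_mkSet.2 hbb, (adj_vxvy G Gt pA pB).2 ⟨rfl, rfl⟩⟩
    | vy i j =>
      have hbb : bb (i, j) = true := by simpa [leftPred] using hz
      exact ⟨.vx i j, mem_mkSet.2 hbb, (adj_vyvx G Gt pA pB).2 ⟨rfl, rfl⟩⟩
    | vu i => exact absurd trivial hz
    | vv i => exact ⟨.vu i, mem_mkSet.2 trivial, (adj_vvvu G Gt pA pB).2 le_rfl⟩

theorem rightSet_maxIndep (hGadj : ∀ a a', G.Adj a a' → (pA a ↔ ¬ pA a'))
    (hs : 0 < s) {N : Finset β} (k : Fin s) (bb : Fin k.val × Fin t → Bool)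
    (hN : IsMaxIndep Gt N) :
    IsMaxIndep (HG G Gt pA pB) (mkSet (rightPred pA pB N k bb) : Finset (CV α β s t)) := by
  classical
  apply maxIndep_of_blockers
  · intro z hz w hw hadj
    rw [mem_mkSet] at hz hw
    cases z <;> cases w <;> simp_all [rightPred]
    all_goals try first
      | (exact hN.1 _ hz _ hw hadj)
      | (have := hGadj _ _ hadj; tauto)
    all_goals (try obtain ⟨hlt1, -⟩ := hz)
    all_goals (try obtain ⟨hlt2, -⟩ := hw)
    all_goals (try obtain ⟨heq, -⟩ := hadj)
    all_goals simp only [Fin.lt_def, Fin.le_def] at *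
    all_goals (have := k.isLt; omega)
  · intro z hz
    rw [mem_mkSet] at hz
    cases z with
    | ga a =>
      by_cases hpa : pA a
      · refine ⟨.vv k, mem_mkSet.2 le_rfl, (adj_gavv G Gt pA pB).2 hpa⟩
      · have h2 : ¬ (∀ b ∈ N, ¬ pB b) := fun h => hz ⟨hpa, h⟩
        push_neg at h2
        obtain ⟨b, hbN, hpb⟩ := h2
        exact ⟨.gb b, mem_mkSet.2 hbN, (adj_gagb G Gt pA pB).2 (Or.inr ⟨hpa, hpb⟩)⟩
    | gb b =>
      obtain ⟨b', hb'N, hadj⟩ := maxIndep_blocker hN hz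
      exact ⟨.gb b', mem_mkSet.2 hb'N, (adj_gbgb G Gt pA pB).2 hadj⟩
    | vx i j =>
      by_cases hik : i.val < k.val
      · have hbb : bb (⟨i.val, hik⟩, j) = false := by
          simp only [rightPred] at hz
          push_neg at hz
          simpa using hz hik
        refine ⟨.vy i j, mem_mkSet.2 ?_, (adj_vxvy G Gt pA pB).2 ⟨rfl, rfl⟩⟩
        intro h
        simpa using hbb
      · refine ⟨.vv k, mem_mkSet.2 le_rfl, (adj_vxvv G Gt pA pB).2 ?_⟩
        exact Fin.le_def.2 (by omega)
    | vy i j =>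
      simp only [rightPred] at hz
      push_neg at hz
      obtain ⟨h, hbb⟩ := hz
      refine ⟨.vx i j, mem_mkSet.2 ⟨h, by simpa using hbb⟩, (adj_vyvx G Gt pA pB).2 ⟨rfl, rfl⟩⟩
    | vu i =>
      have hik : k.val ≤ i.val := by simpa [rightPred] using hz
      exact ⟨.vv i, mem_mkSet.2 hik, (adj_vuvv G Gt pA pB).2 le_rfl⟩
    | vv i =>
      have hik : i.val < k.val := by simpa [rightPred] using hz
      exact ⟨.vu i, mem_mkSet.2 hik, (adj_vvvu G Gt pA pB).2 le_rfl⟩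

end MIS

section Struct
variable {α β : Type*} {s t : ℕ} [Fintype α] [Fintype β]
variable {G : SimpleGraph α} {Gt : SimpleGraph β} {pA : α → Prop} {pB : β → Prop}

open Classical in
noncomputable def gaPart (S : Finset (CV α β s t)) : Finset α :=
  Finset.univ.filter (fun a => CV.ga a ∈ S)

open Classical in
noncomputable def gbPart (S : Finset (CV α β s t)) : Finset β :=
  Finset.univ.filter (fun b => CV.gb b ∈ S)

@[simp] lemma mem_gaPart {S : Finset (CV α β s t)} {a : α} :
    a ∈ gaPart S ↔ CV.ga a ∈ S := by simp [gaPart]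

@[simp] lemma mem_gbPart {S : Finset (CV α β s t)} {b : β} :
    b ∈ gbPart S ↔ CV.gb b ∈ S := by simp [gbPart]

variable {S : Finset (CV α β s t)} (hS : IsMaxIndep (HG G Gt pA pB) S)

set_option linter.unusedSectionVars false

include hS

/-- The `vy`/`vx` complementarity: holds in every maximal independent set. -/
lemma vy_mem_iff (i : Fin s) (j : Fin t) : CV.vy i j ∈ S ↔ (CV.vx i j : CV α β s t) ∉ S := by
  constructor
  · intro hy hx
    exact hS.1 _ hx _ hy ((adj_vxvy G Gt pA pB).2 ⟨rfl, rfl⟩)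
  · intro hx
    by_contra hy
    obtain ⟨w, hwS, hadj⟩ := maxIndep_blocker hS hy
    cases w with
    | ga a => exact (adj_vyga G Gt pA pB) hadj
    | gb b => exact (adj_vygb G Gt pA pB) hadj
    | vx i' j' =>
      obtain ⟨h1, h2⟩ := (adj_vyvx G Gt pA pB).1 hadj
      subst h1; subst h2; exact hx hwS
    | vy i' j' => exact (adj_vyvy G Gt pA pB) hadj
    | vu i' => exact (adj_vyvu G Gt pA pB) hadj
    | vv i' => exact (adj_vyvv G Gt pA pB) hadj

/-- vv-membership is upward closed. -/
lemma vv_up {i i' : Fin s} (hi : CV.vv i ∈ S) (hle : i ≤ i') : (CV.vv i' : CV α β s t) ∈ S := by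
  by_contra h
  obtain ⟨w, hwS, hadj⟩ := maxIndep_blocker hS h
  cases w with
  | ga a =>
    have hpa := (adj_vvga G Gt pA pB).1 hadj
    exact hS.1 _ hwS _ hi ((adj_gavv G Gt pA pB).2 hpa)
  | gb b => exact (adj_vvgb G Gt pA pB) hadj
  | vx i'' j =>
    have h2 := (adj_vvvx G Gt pA pB).1 hadj
    exact hS.1 _ hwS _ hi ((adj_vxvv G Gt pA pB).2 (le_trans hle h2))
  | vy i'' j => exact (adj_vvvy G Gt pA pB) hadj
  | vu i'' =>
    have h2 := (adj_vvvu G Gt pA pB).1 hadj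
    exact hS.1 _ hwS _ hi ((adj_vuvv G Gt pA pB).2 (le_trans hle h2))
  | vv i'' => exact (adj_vvvv G Gt pA pB) hadj

section Left
variable (hs : 0 < s) (hvv : (CV.vv (ftop s hs) : CV α β s t) ∉ S)

include hvv

lemma left_no_vv : ∀ i, (CV.vv i : CV α β s t) ∉ S := by
  intro i hi
  exact hvv (vv_up hS hi (Fin.le_def.2 (by have := i.isLt; simp [ftop]; omega)))

lemma left_no_gbB : ∀ b, ¬ pB b → (CV.gb b : CV α β s t) ∉ S := by
  intro b hb hbS
  obtain ⟨w, hwS, hadj⟩ := maxIndep_blocker hS hvv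
  cases w with
  | ga a =>
    have hpa := (adj_vvga G Gt pA pB).1 hadj
    exact hS.1 _ hwS _ hbS ((adj_gagb G Gt pA pB).2 (Or.inl ⟨hpa, hb⟩))
  | gb b' => exact (adj_vvgb G Gt pA pB) hadj
  | vx i' j =>
    have h2 := (adj_vvvx G Gt pA pB).1 hadj
    have hv : i'.val = s - 1 := by
      rw [Fin.le_def] at h2; have := i'.isLt; simp [ftop] at h2; omega
    exact hS.1 _ hwS _ hbS ((adj_vxgb G Gt pA pB).2 ⟨hv, hb⟩)
  | vy i' j => exact (adj_vvvy G Gt pA pB) hadj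
  | vu i' =>
    have h2 := (adj_vvvu G Gt pA pB).1 hadj
    have hv : i'.val = s - 1 := by
      rw [Fin.le_def] at h2; have := i'.isLt; simp [ftop] at h2; omega
    exact hS.1 _ hwS _ hbS ((adj_vugb G Gt pA pB).2 ⟨hv, hb⟩)
  | vv i' => exact (adj_vvvv G Gt pA pB) hadj

lemma left_vu_mem : ∀ i, (CV.vu i : CV α β s t) ∈ S := by
  intro i
  by_contra h
  obtain ⟨w, hwS, hadj⟩ := maxIndep_blocker hS h
  cases w with
  | ga a => exact (adj_vuga G Gt pA pB) hadj
  | gb b =>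
    obtain ⟨h1, h2⟩ := (adj_vugb G Gt pA pB).1 hadj
    exact left_no_gbB hS hs hvv b h2 hwS
  | vx i' j => exact (adj_vuvx G Gt pA pB) hadj
  | vy i' j => exact (adj_vuvy G Gt pA pB) hadj
  | vu i' => exact (adj_vuvu G Gt pA pB) hadj
  | vv i' =>
    have h2 := (adj_vuvv G Gt pA pB).1 hadj
    exact left_no_vv hS hs hvv i' hwS

lemma left_half (hGadj : ∀ a a', G.Adj a a' → (pA a ↔ ¬ pA a'))
    {b : β} (hpb : pB b) (hbS : CV.gb b ∈ S) :
    ∀ a, pA a → (CV.ga a : CV α β s t) ∈ S := by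
  intro a hpa
  by_contra h
  obtain ⟨w, hwS, hadj⟩ := maxIndep_blocker hS h
  cases w with
  | ga a' =>
    have hadjG := (adj_gaga G Gt pA pB).1 hadj
    have hpa' : ¬ pA a' := (hGadj a a' hadjG).1 hpa
    exact hS.1 _ hwS _ hbS ((adj_gagb G Gt pA pB).2 (Or.inr ⟨hpa', hpb⟩))
  | gb b' =>
    rcases (adj_gagb G Gt pA pB).1 hadj with ⟨h1, h2⟩ | ⟨h1, h2⟩
    · exact left_no_gbB hS hs hvv b' h2 hwS
    · exact h1 hpa
  | vx i j => exact (adj_gavx G Gt pA pB) hadj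
  | vy i j => exact (adj_gavy G Gt pA pB) hadj
  | vu i => exact (adj_gavu G Gt pA pB) hadj
  | vv i => exact left_no_vv hS hs hvv i hwS

lemma left_gaPart_maxIndep (hGadj : ∀ a a', G.Adj a a' → (pA a ↔ ¬ pA a'))
    (hisoG : ∀ a, ∃ a', G.Adj a a') :
    IsMaxIndep G (gaPart S) := by
  apply maxIndep_of_blockers
  · intro a ha a' ha' hadj
    rw [mem_gaPart] at ha ha'
    exact hS.1 _ ha _ ha' ((adj_gaga G Gt pA pB).2 hadj)
  · intro a ha
    rw [mem_gaPart] at ha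
    obtain ⟨w, hwS, hadj⟩ := maxIndep_blocker hS ha
    cases w with
    | ga a' => exact ⟨a', mem_gaPart.2 hwS, (adj_gaga G Gt pA pB).1 hadj⟩
    | gb b =>
      rcases (adj_gagb G Gt pA pB).1 hadj with ⟨h1, h2⟩ | ⟨h1, h2⟩
      · exact absurd hwS (left_no_gbB hS hs hvv b h2)
      · obtain ⟨a', hadj'⟩ := hisoG a
        have hpa' : pA a' := by have := hGadj a a' hadj'; tauto
        exact ⟨a', mem_gaPart.2 (left_half hS hs hvv hGadj h2 hwS a' hpa'), hadj'⟩
    | vx i j => exact absurd hadj (adj_gavx G Gt pA pB)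
    | vy i j => exact absurd hadj (adj_gavy G Gt pA pB)
    | vu i => exact absurd hadj (adj_gavu G Gt pA pB)
    | vv i => exact absurd hwS (left_no_vv hS hs hvv i)

open Classical in
lemma left_struct (hGadj : ∀ a a', G.Adj a a' → (pA a ↔ ¬ pA a'))
    (hGtadj : ∀ b b', Gt.Adj b b' → (pB b ↔ ¬ pB b')) :
    S = mkSet (leftPred pA pB (gaPart S)
      (fun p => if CV.vx p.1 p.2 ∈ S then true else false)) := by
  ext z
  rw [mem_mkSet]
  cases z with
  | ga a => simp [leftPred]
  | gb b =>
    show _ ↔ pB b ∧ _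
    constructor
    · intro hbS
      have hpb : pB b := by
        by_contra hb
        exact left_no_gbB hS hs hvv b hb hbS
      refine ⟨hpb, fun a haM => ?_⟩
      rw [mem_gaPart] at haM
      by_contra hpa
      exact hS.1 _ haM _ hbS ((adj_gagb G Gt pA pB).2 (Or.inr ⟨hpa, hpb⟩))
    · rintro ⟨hpb, hcond⟩
      by_contra h
      obtain ⟨w, hwS, hadj⟩ := maxIndep_blocker hS h
      cases w with
      | ga a' =>
        rcases (adj_gbga G Gt pA pB).1 hadj with ⟨h1, h2⟩ | ⟨h1, h2⟩
        · exact h2 hpb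
        · exact h1 (hcond a' (mem_gaPart.2 hwS))
      | gb b' =>
        have hadjGt := (adj_gbgb G Gt pA pB).1 hadj
        have hpb' : ¬ pB b' := (hGtadj b b' hadjGt).1 hpb
        exact left_no_gbB hS hs hvv b' hpb' hwS
      | vx i j => exact ((adj_gbvx G Gt pA pB).1 hadj).2 hpb
      | vy i j => exact (adj_gbvy G Gt pA pB) hadj
      | vu i => exact ((adj_gbvu G Gt pA pB).1 hadj).2 hpb
      | vv i => exact (adj_gbvv G Gt pA pB) hadj
  | vx i j =>
    show _ ↔ _ = true
    by_cases hx : CV.vx i j ∈ S <;> simp [hx]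
  | vy i j =>
    show _ ↔ _ = false
    rw [vy_mem_iff hS]
    by_cases hx : CV.vx i j ∈ S <;> simp [hx]
  | vu i => simpa [leftPred] using left_vu_mem hS hs hvv i
  | vv i => simpa [leftPred] using left_no_vv hS hs hvv i

end Left

end Struct

section Struct2
variable {α β : Type*} {s t : ℕ} [Fintype α] [Fintype β]
variable {G : SimpleGraph α} {Gt : SimpleGraph β} {pA : α → Prop} {pB : β → Prop}
variable {S : Finset (CV α β s t)} (hS : IsMaxIndep (HG G Gt pA pB) S)
variable (hs : 0 < s) (hvt : (CV.vv (ftop s hs) : CV α β s t) ∈ S)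

set_option linter.unusedSectionVars false

noncomputable def kappa : Fin s :=
  ⟨sInf {n : ℕ | ∃ i : Fin s, i.val = n ∧ CV.vv i ∈ S}, by
    have h1 : (s - 1) ∈ {n : ℕ | ∃ i : Fin s, i.val = n ∧ CV.vv i ∈ S} :=
      ⟨ftop s hs, rfl, hvt⟩
    have h2 := Nat.sInf_le h1
    omega⟩

lemma kappa_mem : (CV.vv (kappa hs hvt) : CV α β s t) ∈ S := by
  obtain ⟨i, hival, hmem⟩ :=
    Nat.sInf_mem (s := {n : ℕ | ∃ i : Fin s, i.val = n ∧ CV.vv i ∈ S})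
      ⟨s - 1, ftop s hs, rfl, hvt⟩
  have he : kappa hs hvt = i := Fin.ext (by simp [kappa, ← hival])
  rw [he]; exact hmem

lemma kappa_min {i : Fin s} (h : (CV.vv i : CV α β s t) ∈ S) : kappa hs hvt ≤ i :=
  Fin.le_def.2 (Nat.sInf_le ⟨i, rfl, h⟩)

include hS hs hvt

lemma vv_mem_iff (i : Fin s) : (CV.vv i : CV α β s t) ∈ S ↔ kappa hs hvt ≤ i := by
  constructor
  · intro hi
    exact kappa_min hs hvt hi
  · intro hi
    exact vv_up hS (kappa_mem hs hvt) hi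

lemma right_no_gaA {a : α} (hpa : pA a) : (CV.ga a : CV α β s t) ∉ S := by
  intro h
  exact hS.1 _ h _ (kappa_mem hs hvt) ((adj_gavv G Gt pA pB).2 hpa)

lemma right_no_x {i : Fin s} (hki : kappa hs hvt ≤ i) (j : Fin t) :
    (CV.vx i j : CV α β s t) ∉ S := by
  intro h
  exact hS.1 _ h _ (kappa_mem hs hvt) ((adj_vxvv G Gt pA pB).2 hki)

lemma right_no_u {i : Fin s} (hki : kappa hs hvt ≤ i) :
    (CV.vu i : CV α β s t) ∉ S := by
  intro h
  exact hS.1 _ h _ (kappa_mem hs hvt) ((adj_vuvv G Gt pA pB).2 hki)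

lemma right_u_mem {i : Fin s} (hik : i < kappa hs hvt) :
    (CV.vu i : CV α β s t) ∈ S := by
  by_contra h
  obtain ⟨w, hwS, hadj⟩ := maxIndep_blocker hS h
  cases w with
  | ga a => exact (adj_vuga G Gt pA pB) hadj
  | gb b =>
    obtain ⟨h1, h2⟩ := (adj_vugb G Gt pA pB).1 hadj
    have h3 := (kappa hs hvt).isLt
    rw [Fin.lt_def] at hik
    omega
  | vx i' j => exact (adj_vuvx G Gt pA pB) hadj
  | vy i' j => exact (adj_vuvy G Gt pA pB) hadj
  | vu i' => exact (adj_vuvu G Gt pA pB) hadj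
  | vv i' =>
    have h2 := (adj_vuvv G Gt pA pB).1 hadj
    have h3 := (vv_mem_iff hS hs hvt i').1 hwS
    rw [Fin.lt_def] at hik
    rw [Fin.le_def] at h2 h3
    omega

lemma right_half (hGtadj : ∀ b b', Gt.Adj b b' → (pB b ↔ ¬ pB b'))
    {a : α} (hpa : ¬ pA a) (haS : CV.ga a ∈ S) :
    ∀ b, ¬ pB b → (CV.gb b : CV α β s t) ∈ S := by
  intro b hpb
  by_contra h
  obtain ⟨w, hwS, hadj⟩ := maxIndep_blocker hS h
  cases w with
  | ga a'' =>
    rcases (adj_gbga G Gt pA pB).1 hadj with ⟨h1, h2⟩ | ⟨h1, h2⟩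
    · exact right_no_gaA hS hs hvt h1 hwS
    · exact hpb h2
  | gb b'' =>
    have hadjGt := (adj_gbgb G Gt pA pB).1 hadj
    have hpb'' : pB b'' := by have := hGtadj b b'' hadjGt; tauto
    exact hS.1 _ haS _ hwS ((adj_gagb G Gt pA pB).2 (Or.inr ⟨hpa, hpb''⟩))
  | vx i j =>
    obtain ⟨h1, h2⟩ := (adj_gbvx G Gt pA pB).1 hadj
    have hki : kappa hs hvt ≤ i := by
      rw [Fin.le_def]; have := (kappa hs hvt).isLt; omega
    exact right_no_x hS hs hvt hki j hwS
  | vy i j => exact (adj_gbvy G Gt pA pB) hadj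
  | vu i =>
    obtain ⟨h1, h2⟩ := (adj_gbvu G Gt pA pB).1 hadj
    have hki : kappa hs hvt ≤ i := by
      rw [Fin.le_def]; have := (kappa hs hvt).isLt; omega
    exact right_no_u hS hs hvt hki hwS
  | vv i => exact (adj_gbvv G Gt pA pB) hadj

lemma right_gbPart_maxIndep (hGtadj : ∀ b b', Gt.Adj b b' → (pB b ↔ ¬ pB b'))
    (hisoGt : ∀ b, ∃ b', Gt.Adj b b') :
    IsMaxIndep Gt (gbPart S) := by
  apply maxIndep_of_blockers
  · intro b hb b' hb' hadj
    rw [mem_gbPart] at hb hb'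
    exact hS.1 _ hb _ hb' ((adj_gbgb G Gt pA pB).2 hadj)
  · intro b hb
    rw [mem_gbPart] at hb
    obtain ⟨w, hwS, hadj⟩ := maxIndep_blocker hS hb
    cases w with
    | ga a =>
      rcases (adj_gbga G Gt pA pB).1 hadj with ⟨h1, h2⟩ | ⟨h1, h2⟩
      · exact absurd hwS (right_no_gaA hS hs hvt h1)
      · obtain ⟨b₀, hadj0⟩ := hisoGt b
        have hpb0 : ¬ pB b₀ := by have := hGtadj b b₀ hadj0; tauto
        exact ⟨b₀, mem_gbPart.2 (right_half hS hs hvt hGtadj h1 hwS b₀ hpb0), hadj0⟩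
    | gb b' => exact ⟨b', mem_gbPart.2 hwS, (adj_gbgb G Gt pA pB).1 hadj⟩
    | vx i j =>
      obtain ⟨h1, h2⟩ := (adj_gbvx G Gt pA pB).1 hadj
      have hki : kappa hs hvt ≤ i := by
        rw [Fin.le_def]; have := (kappa hs hvt).isLt; omega
      exact absurd hwS (right_no_x hS hs hvt hki j)
    | vy i j => exact absurd hadj (adj_gbvy G Gt pA pB)
    | vu i =>
      obtain ⟨h1, h2⟩ := (adj_gbvu G Gt pA pB).1 hadj
      have hki : kappa hs hvt ≤ i := by
        rw [Fin.le_def]; have := (kappa hs hvt).isLt; omega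
      exact absurd hwS (right_no_u hS hs hvt hki)
    | vv i => exact absurd hadj (adj_gbvv G Gt pA pB)

open Classical in
lemma right_struct (hGadj : ∀ a a', G.Adj a a' → (pA a ↔ ¬ pA a')) :
    S = mkSet (rightPred pA pB (gbPart S) (kappa hs hvt)
      (fun p => if CV.vx (⟨p.1.val, lt_trans p.1.isLt (kappa hs hvt).isLt⟩ : Fin s) p.2 ∈ S
        then true else false)) := by
  ext z
  rw [mem_mkSet]
  cases z with
  | ga a =>
    show _ ↔ ¬ pA a ∧ _
    constructor
    · intro haS
      have hpa : ¬ pA a := fun h => right_no_gaA hS hs hvt h haS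
      refine ⟨hpa, fun b hb => ?_⟩
      rw [mem_gbPart] at hb
      intro hpb
      exact hS.1 _ haS _ hb ((adj_gagb G Gt pA pB).2 (Or.inr ⟨hpa, hpb⟩))
    · rintro ⟨hpa, hcond⟩
      by_contra h
      obtain ⟨w, hwS, hadj⟩ := maxIndep_blocker hS h
      cases w with
      | ga a' =>
        have hadjG := (adj_gaga G Gt pA pB).1 hadj
        have hpa' : pA a' := by have := hGadj a a' hadjG; tauto
        exact right_no_gaA hS hs hvt hpa' hwS
      | gb b' =>
        rcases (adj_gagb G Gt pA pB).1 hadj with ⟨h1, h2⟩ | ⟨h1, h2⟩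
        · exact hpa h1
        · exact hcond b' (mem_gbPart.2 hwS) h2
      | vx i j => exact (adj_gavx G Gt pA pB) hadj
      | vy i j => exact (adj_gavy G Gt pA pB) hadj
      | vu i => exact (adj_gavu G Gt pA pB) hadj
      | vv i => exact hpa ((adj_gavv G Gt pA pB).1 hadj)
  | gb b => simp [rightPred]
  | vx i j =>
    show _ ↔ ∃ h : i.val < (kappa hs hvt).val, _
    constructor
    · intro hx
      have hik : i.val < (kappa hs hvt).val := by
        by_contra hcon
        exact right_no_x hS hs hvt (Fin.le_def.2 (by omega)) j hx
      refine ⟨hik, ?_⟩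
      simp only [Fin.eta]
      rw [if_pos hx]
    · rintro ⟨hik, hb⟩
      simp only [Fin.eta] at hb
      by_contra hx
      rw [if_neg hx] at hb
      exact Bool.noConfusion hb
  | vy i j =>
    show _ ↔ ∀ h : i.val < (kappa hs hvt).val, _
    rw [vy_mem_iff hS]
    constructor
    · intro hx hik
      simp only [Fin.eta]
      rw [if_neg hx]
    · intro hall
      by_cases hik : i.val < (kappa hs hvt).val
      · have := hall hik
        simp only [Fin.eta] at this
        intro hx
        rw [if_pos hx] at this
        exact Bool.noConfusion this
      · exact right_no_x hS hs hvt (Fin.le_def.2 (by omega)) j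
  | vu i =>
    show _ ↔ i.val < (kappa hs hvt).val
    constructor
    · intro hu
      by_contra hcon
      exact right_no_u hS hs hvt (Fin.le_def.2 (by omega)) hu
    · intro hik
      exact right_u_mem hS hs hvt (Fin.lt_def.2 hik)
  | vv i =>
    show _ ↔ (kappa hs hvt).val ≤ i.val
    rw [vv_mem_iff hS hs hvt, Fin.le_def]

end Struct2

section StructAll
variable {α β : Type*} {s t : ℕ} [Fintype α] [Fintype β]
variable {G : SimpleGraph α} {Gt : SimpleGraph β} {pA : α → Prop} {pB : β → Prop}

theorem struct_cases (hGadj : ∀ a a', G.Adj a a' → (pA a ↔ ¬ pA a'))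
    (hGtadj : ∀ b b', Gt.Adj b b' → (pB b ↔ ¬ pB b'))
    (hisoG : ∀ a, ∃ a', G.Adj a a') (hisoGt : ∀ b, ∃ b', Gt.Adj b b')
    (hs : 0 < s) {S : Finset (CV α β s t)} (hS : IsMaxIndep (HG G Gt pA pB) S) :
    (∃ M bb, IsMaxIndep G M ∧ S = mkSet (leftPred pA pB M bb)) ∨
    (∃ (N : Finset β) (k : Fin s) (bb : Fin k.val × Fin t → Bool),
      IsMaxIndep Gt N ∧ S = mkSet (rightPred pA pB N k bb)) := by
  classical
  by_cases h : (CV.vv (ftop s hs) : CV α β s t) ∈ S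
  · right
    exact ⟨gbPart S, kappa hs h, _, right_gbPart_maxIndep hS hs h hGtadj hisoGt,
      right_struct hS hs h hGadj⟩
  · left
    exact ⟨gaPart S, _, left_gaPart_maxIndep hS hs h hGadj hisoG,
      left_struct hS hs h hGadj hGtadj⟩

end StructAll

section Count
variable {α β : Type*} {s t : ℕ} [Fintype α] [Fintype β]
variable {G : SimpleGraph α} {Gt : SimpleGraph β} {pA : α → Prop} {pB : β → Prop}

set_option linter.unusedSectionVars false

theorem count_HG (hGadj : ∀ a a', G.Adj a a' → (pA a ↔ ¬ pA a'))
    (hGtadj : ∀ b b', Gt.Adj b b' → (pB b ↔ ¬ pB b'))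
    (hisoG : ∀ a, ∃ a', G.Adj a a') (hisoGt : ∀ b, ∃ b', Gt.Adj b b')
    (hs : 0 < s) :
    Nat.card {S : Finset (CV α β s t) // IsMaxIndep (HG G Gt pA pB) S} =
      iotaM G * 2 ^ (s * t) + iotaM Gt * ∑ k ∈ Finset.range s, 2 ^ (k * t) := by
  classical
  set LD := ({M : Finset α // IsMaxIndep G M} × (Fin s × Fin t → Bool)) with hLD
  set RD := ({N : Finset β // IsMaxIndep Gt N} × (Σ k : Fin s, (Fin k.val × Fin t → Bool)))
    with hRD
  let Psi : LD ⊕ RD → {S : Finset (CV α β s t) // IsMaxIndep (HG G Gt pA pB) S} :=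
    fun d => match d with
      | Sum.inl (M, bb) => ⟨mkSet (leftPred pA pB M.1 bb), leftSet_maxIndep hGtadj hs bb M.2⟩
      | Sum.inr (N, ⟨k, bb⟩) =>
          ⟨mkSet (rightPred pA pB N.1 k bb), rightSet_maxIndep hGadj hs k bb N.2⟩
  have hinj : Function.Injective Psi := by
    rintro (⟨M1, bb1⟩ | ⟨N1, k1, bb1⟩) (⟨M2, bb2⟩ | ⟨N2, k2, bb2⟩) h
    · simp only [Psi, Subtype.mk_eq_mk] at h
      have hmem : ∀ z, leftPred pA pB M1.1 bb1 z ↔ leftPred pA pB M2.1 bb2 z := by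
        intro z
        rw [← mem_mkSet (P := leftPred pA pB M1.1 bb1), h, mem_mkSet]
      have hM : M1.1 = M2.1 := by
        ext a; exact hmem (CV.ga a)
      have hbb : bb1 = bb2 := by
        funext p
        have hx := hmem (CV.vx p.1 p.2)
        simp only [leftPred] at hx
        cases hb1 : bb1 p <;> cases hb2 : bb2 p <;> simp_all [Prod.mk.eta]
      obtain rfl : M1 = M2 := Subtype.ext hM
      obtain rfl : bb1 = bb2 := hbb
      rfl
    · exfalso
      simp only [Psi, Subtype.mk_eq_mk] at h
      have hmem := (Finset.ext_iff.1 h (CV.vv (ftop s hs))).2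
      rw [mem_mkSet, mem_mkSet] at hmem
      have hge : k2.val ≤ (ftop s hs).val := by
        have h1 := k2.isLt
        have h2 : (ftop s hs).val = s - 1 := rfl
        omega
      exact hmem hge
    · exfalso
      simp only [Psi, Subtype.mk_eq_mk] at h
      have hmem := (Finset.ext_iff.1 h (CV.vv (ftop s hs))).1
      rw [mem_mkSet, mem_mkSet] at hmem
      have hge : k1.val ≤ (ftop s hs).val := by
        have h1 := k1.isLt
        have h2 : (ftop s hs).val = s - 1 := rfl
        omega
      exact hmem hge
    · simp only [Psi, Subtype.mk_eq_mk] at h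
      have hmem : ∀ z, rightPred pA pB N1.1 k1 bb1 z ↔ rightPred pA pB N2.1 k2 bb2 z := by
        intro z
        rw [← mem_mkSet (P := rightPred pA pB N1.1 k1 bb1), h, mem_mkSet]
      have hN : N1.1 = N2.1 := by
        ext b; exact hmem (CV.gb b)
      have hk : k1 = k2 := by
        have h1 := hmem (CV.vu k1)
        have h2 := hmem (CV.vu k2)
        simp only [rightPred] at h1 h2
        have a1 : ¬ k1.val < k2.val := fun hh => lt_irrefl _ (h1.2 hh)
        have a2 : ¬ k2.val < k1.val := fun hh => lt_irrefl _ (h2.1 hh)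
        apply Fin.ext
        omega
      subst hk
      have hbb : bb1 = bb2 := by
        funext p
        obtain ⟨p1, p2⟩ := p
        have hx := hmem (CV.vx ⟨p1.val, lt_trans p1.isLt k1.isLt⟩ p2)
        simp only [rightPred, Fin.eta, exists_prop] at hx
        have hlt : p1.val < k1.val := p1.isLt
        cases hb1 : bb1 (p1, p2) <;> cases hb2 : bb2 (p1, p2) <;> simp_all
      obtain rfl : N1 = N2 := Subtype.ext hN
      obtain rfl : bb1 = bb2 := hbb
      rfl
  have hsurj : Function.Surjective Psi := by
    rintro ⟨S, hS⟩
    rcases struct_cases hGadj hGtadj hisoG hisoGt hs hS with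
      ⟨M, bb, hM, hSeq⟩ | ⟨N, k, bb, hN, hSeq⟩
    · exact ⟨Sum.inl (⟨M, hM⟩, bb), Subtype.ext hSeq.symm⟩
    · exact ⟨Sum.inr (⟨N, hN⟩, ⟨k, bb⟩), Subtype.ext hSeq.symm⟩
  rw [Nat.card_congr (Equiv.ofBijective Psi ⟨hinj, hsurj⟩).symm, Nat.card_sum]
  have hL : Nat.card LD = iotaM G * 2 ^ (s * t) := by
    rw [hLD, Nat.card_prod]
    have h1 : Nat.card {M : Finset α // IsMaxIndep G M} = iotaM G := rfl
    have h2 : Nat.card (Fin s × Fin t → Bool) = 2 ^ (s * t) := by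
      simp [Nat.card_eq_fintype_card, Fintype.card_fun]
    rw [h1, h2]
  have hR : Nat.card RD = iotaM Gt * ∑ k ∈ Finset.range s, 2 ^ (k * t) := by
    rw [hRD, Nat.card_prod]
    have h1 : Nat.card {N : Finset β // IsMaxIndep Gt N} = iotaM Gt := rfl
    have h2 : Nat.card (Σ k : Fin s, (Fin k.val × Fin t → Bool)) =
        ∑ k ∈ Finset.range s, 2 ^ (k * t) := by
      rw [Nat.card_eq_fintype_card, Fintype.card_sigma,
        ← Fin.sum_univ_eq_sum_range (fun k => 2 ^ (k * t)) s]
      apply Finset.sum_congr rfl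
      intro k _
      simp [Fintype.card_fun]
    rw [h1, h2]
  rw [hL, hR]

end Count

section Props
variable {α β : Type*} {s t : ℕ} [Fintype α] [Fintype β]
variable {G : SimpleGraph α} {Gt : SimpleGraph β} {pA : α → Prop} {pB : β → Prop}

set_option linter.unusedSectionVars false

def sideL (pA : α → Prop) (pB : β → Prop) : CV α β s t → Prop
  | .ga a => pA a
  | .gb b => pB b
  | .vx _ _ => True
  | .vy _ _ => False
  | .vu _ => True
  | .vv _ => False

theorem HG_bipartite (hGadj : ∀ a a', G.Adj a a' → (pA a ↔ ¬ pA a'))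
    (hGtadj : ∀ b b', Gt.Adj b b' → (pB b ↔ ¬ pB b')) :
    IsBipartite (HG G Gt pA pB : SimpleGraph (CV α β s t)) := by
  classical
  refine ⟨Finset.univ.filter (fun z => sideL pA pB z),
    Finset.univ.filter (fun z => ¬ sideL pA pB z), ?_, ?_, ?_⟩
  · rw [Finset.disjoint_left]
    intro z hz hz'
    simp only [Finset.mem_filter] at hz hz'
    exact hz'.2 hz.2
  · intro z
    simp only [Finset.mem_filter, Finset.mem_univ, true_and]
    exact em _
  · intro u v hadj
    simp only [Finset.mem_filter, Finset.mem_univ, true_and]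
    have key : sideL pA pB u ↔ ¬ sideL pA pB v := by
      cases u <;> cases v <;> simp_all [sideL] <;>
        first
          | (have := hGadj _ _ hadj; tauto)
          | (have := hGtadj _ _ hadj; tauto)
          | tauto
    tauto

theorem HG_noIsolated (hisoG : ∀ a, ∃ a', G.Adj a a') (hisoGt : ∀ b, ∃ b', Gt.Adj b b') :
    NoIsolated (HG G Gt pA pB : SimpleGraph (CV α β s t)) := by
  intro z
  cases z with
  | ga a =>
    obtain ⟨a', h⟩ := hisoG a
    exact ⟨.ga a', (adj_gaga G Gt pA pB).2 h⟩
  | gb b =>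
    obtain ⟨b', h⟩ := hisoGt b
    exact ⟨.gb b', (adj_gbgb G Gt pA pB).2 h⟩
  | vx i j => exact ⟨.vy i j, (adj_vxvy G Gt pA pB).2 ⟨rfl, rfl⟩⟩
  | vy i j => exact ⟨.vx i j, (adj_vyvx G Gt pA pB).2 ⟨rfl, rfl⟩⟩
  | vu i => exact ⟨.vv i, (adj_vuvv G Gt pA pB).2 le_rfl⟩
  | vv i => exact ⟨.vu i, (adj_vvvu G Gt pA pB).2 le_rfl⟩

end Props

section Arith

lemma geom_sum_mul (t : ℕ) : ∀ s : ℕ,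
    (2 ^ t - 1) * ∑ k ∈ Finset.range s, 2 ^ (k * t) = 2 ^ (s * t) - 1 := by
  intro s
  induction s with
  | zero => simp
  | succ n ih =>
    rw [Finset.sum_range_succ, Nat.mul_add, ih]
    have h1 : 1 ≤ 2 ^ (n * t) := Nat.one_le_two_pow
    have h2 : (2 ^ t - 1) * 2 ^ (n * t) = 2 ^ (n * t) * 2 ^ t - 2 ^ (n * t) := by
      rw [Nat.sub_mul, one_mul, mul_comm]
    have h3 : 2 ^ ((n + 1) * t) = 2 ^ (n * t) * 2 ^ t := by
      rw [add_mul, one_mul, pow_add]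
    have h4 : 2 ^ (n * t) ≤ 2 ^ (n * t) * 2 ^ t :=
      Nat.le_mul_of_pos_right _ (Nat.pos_of_ne_zero (by positivity))
    omega

lemma geom_sum_div {t : ℕ} (ht : 1 ≤ t) (s : ℕ) :
    (2 ^ (s * t) - 1) / (2 ^ t - 1) = ∑ k ∈ Finset.range s, 2 ^ (k * t) := by
  have hpos : 0 < 2 ^ t - 1 := by
    have : (2 : ℕ) ^ 1 ≤ 2 ^ t := Nat.pow_le_pow_right (by norm_num) ht
    simp at this
    omega
  rw [← geom_sum_mul t s, Nat.mul_div_cancel_left _ hpos]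

end Arith

section Transport
variable {γ δ : Type*} [Fintype γ] [Fintype δ]

lemma isMaxIndep_comap_iff (e : γ ≃ δ) (G : SimpleGraph δ) (S : Finset γ) :
    IsMaxIndep (G.comap e) S ↔ IsMaxIndep G (S.map e.toEmbedding) := by
  classical
  have hmem : ∀ (T : Finset γ) (d : δ), d ∈ T.map e.toEmbedding ↔ e.symm d ∈ T := by
    intro T d
    rw [Finset.mem_map_equiv]
  have hind : ∀ T : Finset γ, IsIndep (G.comap e) T ↔ IsIndep G (T.map e.toEmbedding) := by
    intro T
    constructor
    · intro hi u hu v hv hadj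
      rw [hmem] at hu hv
      refine hi _ hu _ hv ?_
      rw [SimpleGraph.comap_adj]
      simpa using hadj
    · intro hi u hu v hv hadj
      refine hi (e u) ?_ (e v) ?_ hadj
      · rw [hmem]; simpa using hu
      · rw [hmem]; simpa using hv
  constructor
  · rintro ⟨hi, hm⟩
    refine ⟨(hind S).1 hi, fun T hT hsub => ?_⟩
    have h1 : IsIndep (G.comap e) (T.map e.symm.toEmbedding) := by
      intro u hu v hv hadj
      rw [Finset.mem_map_equiv] at hu hv
      simp only [Equiv.symm_symm] at hu hv
      refine hT _ hu _ hv ?_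
      rw [SimpleGraph.comap_adj] at hadj
      exact hadj
    have h2 : S ⊆ T.map e.symm.toEmbedding := by
      intro a haS
      rw [Finset.mem_map_equiv]
      simp only [Equiv.symm_symm]
      have : e a ∈ S.map e.toEmbedding := by rw [hmem]; simpa using haS
      exact hsub this
    have h3 := hm _ h1 h2
    rw [h3]
    ext d
    rw [hmem]
    rw [Finset.mem_map_equiv, Equiv.symm_symm]
    constructor
    · intro h; simpa using h
    · intro h; simpa using h
  · rintro ⟨hi, hm⟩
    refine ⟨(hind S).2 hi, fun T hT hsub => ?_⟩
    have h1 : IsIndep G (T.map e.toEmbedding) := (hind T).1 hT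
    have h2 : S.map e.toEmbedding ⊆ T.map e.toEmbedding := Finset.map_subset_map.2 hsub
    have h3 := hm _ h1 h2
    exact Finset.map_injective _ h3

lemma iotaM_comap (e : γ ≃ δ) (G : SimpleGraph δ) :
    iotaM (G.comap e) = iotaM G := by
  apply Nat.card_congr
  exact Equiv.subtypeEquiv e.finsetCongr (fun S => by
    rw [Equiv.finsetCongr_apply]
    exact isMaxIndep_comap_iff e G S)

end Transport

section Final
variable {α β : Type*} [Fintype α] [Fintype β]

theorem main_construction (G : SimpleGraph α) (Gt : SimpleGraph β)
    (hbipG : IsBipartite G) (hisoG : NoIsolated G)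
    (hbipGt : IsBipartite Gt) (hisoGt : NoIsolated Gt)
    (s t : ℕ) (hs : 1 ≤ s) (ht : 1 ≤ t) :
    ∃ (W : Type) (_ : Fintype W) (G' : SimpleGraph W),
      IsBipartite G' ∧ NoIsolated G' ∧
      iotaM G' = 2 ^ (s * t) * iotaM G + ((2 ^ (s * t) - 1) / (2 ^ t - 1)) * iotaM Gt ∧
      Fintype.card W ≤ Fintype.card α + Fintype.card β + 2 * s * (t + 1) + 3 := by
  classical
  obtain ⟨LG, RG, hdG, hcG, heG⟩ := hbipG
  obtain ⟨LGt, RGt, hdGt, hcGt, heGt⟩ := hbipGt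
  let eα : Fin (Fintype.card α) ≃ α := (Fintype.equivFin α).symm
  let eβ : Fin (Fintype.card β) ≃ β := (Fintype.equivFin β).symm
  let G0 : SimpleGraph (Fin (Fintype.card α)) := G.comap eα
  let Gt0 : SimpleGraph (Fin (Fintype.card β)) := Gt.comap eβ
  let pA0 : Fin (Fintype.card α) → Prop := fun i => eα i ∈ LG
  let pB0 : Fin (Fintype.card β) → Prop := fun i => eβ i ∈ LGt
  have hGadj0 : ∀ i i', G0.Adj i i' → (pA0 i ↔ ¬ pA0 i') := by
    intro i i' h
    rw [SimpleGraph.comap_adj] at h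
    rcases heG _ _ h with ⟨h1, h2⟩ | ⟨h1, h2⟩
    · have h3 : eα i' ∉ LG := Finset.disjoint_right.1 hdG h2
      simp only [pA0]; tauto
    · have h3 : eα i ∉ LG := Finset.disjoint_right.1 hdG h1
      simp only [pA0]; tauto
  have hGtadj0 : ∀ i i', Gt0.Adj i i' → (pB0 i ↔ ¬ pB0 i') := by
    intro i i' h
    rw [SimpleGraph.comap_adj] at h
    rcases heGt _ _ h with ⟨h1, h2⟩ | ⟨h1, h2⟩
    · have h3 : eβ i' ∉ LGt := Finset.disjoint_right.1 hdGt h2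
      simp only [pB0]; tauto
    · have h3 : eβ i ∉ LGt := Finset.disjoint_right.1 hdGt h1
      simp only [pB0]; tauto
  have hisoG0 : ∀ i, ∃ i', G0.Adj i i' := by
    intro i
    obtain ⟨u, hu⟩ := hisoG (eα i)
    exact ⟨eα.symm u, by rw [SimpleGraph.comap_adj]; simpa using hu⟩
  have hisoGt0 : ∀ i, ∃ i', Gt0.Adj i i' := by
    intro i
    obtain ⟨u, hu⟩ := hisoGt (eβ i)
    exact ⟨eβ.symm u, by rw [SimpleGraph.comap_adj]; simpa using hu⟩
  have hs0 : 0 < s := hs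
  refine ⟨CV (Fin (Fintype.card α)) (Fin (Fintype.card β)) s t, inferInstance,
    HG G0 Gt0 pA0 pB0, HG_bipartite hGadj0 hGtadj0, HG_noIsolated hisoG0 hisoGt0, ?_, ?_⟩
  · have hcount := count_HG (t := t) hGadj0 hGtadj0 hisoG0 hisoGt0 hs0
    have h1 : iotaM G0 = iotaM G := iotaM_comap eα G
    have h2 : iotaM Gt0 = iotaM Gt := iotaM_comap eβ Gt
    have h3 : iotaM (HG G0 Gt0 pA0 pB0) =
        Nat.card {S : Finset (CV (Fin (Fintype.card α)) (Fin (Fintype.card β)) s t) //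
          IsMaxIndep (HG G0 Gt0 pA0 pB0) S} := rfl
    rw [h3, hcount, h1, h2, geom_sum_div ht s]
    ring
  · rw [card_CV]
    have h6 : s * t + (s * t + (s + s)) = 2 * (s * t) + 2 * s := by ring
    have h5 : 2 * s * (t + 1) = 2 * (s * t) + 2 * s := by ring
    simp only [Fintype.card_fin]
    omega

end Final

end Stmt15

/-- For bipartite `G`, `G̃` without isolated vertices and `s, t ≥ 1`, there is a
bipartite graph without isolated vertices having exactly
`2^{st}·ι_m(G) + ((2^{st} − 1)/(2^t − 1))·ι_m(G̃)` maximal independent sets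
and at most `ν(G) + ν(G̃) + 2s(t+1) + 3` vertices. -/


theorem stmt_15 {α β : Type*} [Fintype α] [Fintype β]
    (G : SimpleGraph α) (Gt : SimpleGraph β)
    (hbipG : IsBipartite G) (hisoG : NoIsolated G)
    (hbipGt : IsBipartite Gt) (hisoGt : NoIsolated Gt)
    (s t : ℕ) (hs : 1 ≤ s) (ht : 1 ≤ t) :
    ∃ (W : Type) (_ : Fintype W) (G' : SimpleGraph W),
      IsBipartite G' ∧ NoIsolated G' ∧
      iotaM G' = 2 ^ (s * t) * iotaM G + ((2 ^ (s * t) - 1) / (2 ^ t - 1)) * iotaM Gt ∧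
      Fintype.card W ≤ Fintype.card α + Fintype.card β + 2 * s * (t + 1) + 3 :=
  Stmt15.main_construction G Gt hbipG hisoG hbipGt hisoGt s t hs ht
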